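/- arXiv:1707.02551 — 4 statements merged into one kernel-verified Lean document; each statement's English description precedes it below -/
import Mathlib

section
/- If S = ⟨a, b⟩ is the numerical semigroup generated by two coprime positive integers a < b, then the largest integer not in S (the Frobenius number) equals ab - a - b. -/
def IsNumericalSemigroup (S : Set ℕ) : Prop :=
  0 ∈ S ∧ (∀ a ∈ S, ∀ b ∈ S, a + b ∈ S) ∧ Sᶜ.Finite

noncomputable def frob (S : Set ℕ) : ℕ := sSup Sᶜ

noncomputable def genus (S : Set ℕ) : ℕ := Sᶜ.ncard

noncomputable def mult (S : Set ℕ) : ℕ := sInf {n | n ∈ S ∧ n ≠ 0}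

def IsMinGen (S : Set ℕ) (x : ℕ) : Prop :=
  x ∈ S ∧ x ≠ 0 ∧ ∀ a ∈ S, ∀ b ∈ S, a ≠ 0 → b ≠ 0 → x ≠ a + b

def numGen2 (a b : ℕ) : Set ℕ := {n | ∃ x y : ℕ, n = x * a + y * b}

theorem frobenius_two_generators (a b : ℕ) (ha : 0 < a) (hab : a < b)
    (hco : Nat.Coprime a b) :
    frob (numGen2 a b) = a * b - a - b := by
  rcases eq_or_lt_of_le (show 1 ≤ a from ha) with h1 | h1
  · -- a = 1
    have ha1 : a = 1 := h1.symm
    subst ha1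
    have hS : numGen2 1 b = Set.univ := by
      ext n
      simp only [numGen2, Set.mem_setOf_eq, Set.mem_univ, iff_true]
      exact ⟨n, 0, by simp⟩
    simp [frob, hS, one_mul, Nat.sub_sub, csSup_empty]
  · have hfn := frobeniusNumber_pair hco h1 (lt_trans h1 hab)
    have hset : (numGen2 a b)ᶜ = {k | k ∉ AddSubmonoid.closure ({a, b} : Set ℕ)} := by
      ext n
      simp only [Set.mem_compl_iff, numGen2, Set.mem_setOf_eq,
        AddSubmonoid.mem_closure_pair, smul_eq_mul]
      constructor
      · rintro h ⟨x, y, hxy⟩; exact h ⟨x, y, hxy.symm⟩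
      · rintro h ⟨x, y, hxy⟩; exact h ⟨x, y, hxy.symm⟩
    rw [frob, hset]
    exact hfn.csSup_eq
end

section
/- A submonoid S of ℕ has finite complement in ℕ if and only if the greatest common divisor of the elements of S is 1. -/
theorem cofinite_iff_gcd_one (S : AddSubmonoid ℕ) :
    ((S : Set ℕ)ᶜ).Finite ↔ ∀ d : ℕ, (∀ s ∈ S, d ∣ s) → d = 1 := by
  constructor
  · intro hfin d hd
    obtain ⟨N, hN⟩ : ∃ N, ∀ x ∈ (S : Set ℕ)ᶜ, x ≤ N := by
      obtain ⟨N, hN⟩ := hfin.bddAbove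
      exact ⟨N, fun x hx => hN hx⟩
    have h1 : N + 1 ∈ S := by
      by_contra h; exact absurd (hN _ h) (by omega)
    have h2 : N + 2 ∈ S := by
      by_contra h; exact absurd (hN _ h) (by omega)
    have d1 := hd _ h1
    have d2 := hd _ h2
    have : d ∣ 1 := by
      have := Nat.dvd_sub d2 d1
      simpa using this
    exact Nat.dvd_one.mp this
  · intro hgcd
    -- the set of differences of elements of S is a subgroup of ℤ
    set D : AddSubgroup ℤ :=
      { carrier := {x : ℤ | ∃ u ∈ S, ∃ v ∈ S, x = (u : ℤ) - v}
        zero_mem' := ⟨0, S.zero_mem, 0, S.zero_mem, by simp⟩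
        add_mem' := by
          rintro x y ⟨u1, hu1, v1, hv1, rfl⟩ ⟨u2, hu2, v2, hv2, rfl⟩
          exact ⟨u1 + u2, S.add_mem hu1 hu2, v1 + v2, S.add_mem hv1 hv2, by push_cast; ring⟩
        neg_mem' := by
          rintro x ⟨u, hu, v, hv, rfl⟩
          exact ⟨v, hv, u, hu, by ring⟩ } with hD
    obtain ⟨g, hg⟩ := Int.subgroup_cyclic D
    have hgdvd : ∀ s ∈ S, g.natAbs ∣ s := by
      intro s hs
      have : (s : ℤ) ∈ D := ⟨s, hs, 0, S.zero_mem, by simp⟩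
      rw [hg, AddSubgroup.mem_closure_singleton] at this
      obtain ⟨n, hn⟩ := this
      have : g ∣ (s : ℤ) := ⟨n, by rw [← hn, zsmul_eq_mul, Int.cast_id]; ring⟩
      have := Int.natAbs_dvd_natAbs.mpr this
      simpa using this
    have hg1 : g.natAbs = 1 := hgcd _ hgdvd
    -- hence 1 ∈ D : there are consecutive elements
    have h1D : (1 : ℤ) ∈ D := by
      rw [hg, AddSubgroup.mem_closure_singleton]
      have : g ∣ 1 := by
        rw [← Int.natAbs_dvd_natAbs, hg1]; simp
      obtain ⟨c, hc⟩ := this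
      exact ⟨c, by rw [hc, zsmul_eq_mul, Int.cast_id]; ring⟩
    obtain ⟨u, hu, v, hv, huv⟩ := h1D
    have huv' : u = v + 1 := by omega
    subst huv'
    -- now v ∈ S and v + 1 ∈ S; all n ≥ v * v are in S
    have hbig : ∀ n, v * v ≤ n → n ∈ S := by
      intro n hn
      rcases Nat.eq_zero_or_pos v with h0 | hpos
      · subst h0
        have h1 : (1 : ℕ) ∈ S := by simpa using hu
        have := AddSubmonoid.nsmul_mem S h1 n
        simpa using this
      · set q := n / v with hq
        set r := n % v with hr
        have hrlt : r < v := Nat.mod_lt _ hpos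
        have hqr : r ≤ q := by
          have : v * v ≤ v * q + r := by
            rw [hq, hr, Nat.div_add_mod]; exact hn
          nlinarith
        have key : (q - r) * v + r * (v + 1) = n := by
          have h1 : r * v ≤ q * v := Nat.mul_le_mul_right v hqr
          have h2 : v * q + r = n := by rw [hq, hr]; ring_nf; rw [Nat.div_add_mod]
          rw [Nat.sub_mul, Nat.mul_add, Nat.mul_one, Nat.mul_comm v q] at *
          omega
        rw [← key]
        have m1 := AddSubmonoid.nsmul_mem S hv (q - r)
        have m2 := AddSubmonoid.nsmul_mem S hu r
        rw [smul_eq_mul] at m1 m2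
        exact S.add_mem m1 m2
    apply Set.Finite.subset (Set.finite_Iio (v * v))
    intro n hn
    simp only [Set.mem_Iio]
    by_contra h
    exact hn (hbig n (by omega))
end

section
/- For any positive integer g, the number of numerical semigroups S of genus g satisfying F(S) < 2·m(S) equals the Fibonacci number F_{g+1}. -/
def sgp (m : ℕ) (T : Finset ℕ) : Set ℕ := {n | n = 0 ∨ (m ≤ n ∧ n ∉ T)}

lemma sgp_compl {m : ℕ} {T : Finset ℕ} (hm : 1 ≤ m) (hT : T ⊆ Finset.Ioo m (2*m)) :
    (sgp m T)ᶜ = ↑(Finset.Ico 1 m ∪ T) := by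
  ext n
  by_cases hTn : n ∈ T
  · have hx := Finset.mem_Ioo.mp (hT hTn)
    simp [sgp, hTn]
    omega
  · simp [sgp, hTn]
    omega

lemma sgp_isNS {m : ℕ} {T : Finset ℕ} (hm : 1 ≤ m) (hT : T ⊆ Finset.Ioo m (2*m)) :
    IsNumericalSemigroup (sgp m T) := by
  refine ⟨Or.inl rfl, ?_, ?_⟩
  · rintro a (rfl | ⟨ha, haT⟩) b hb
    · simpa using hb
    rcases hb with rfl | ⟨hb, hbT⟩
    · simpa using (show a ∈ sgp m T from Or.inr ⟨ha, haT⟩)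
    · refine Or.inr ⟨by omega, fun h => ?_⟩
      have := Finset.mem_Ioo.mp (hT h); omega
  · rw [sgp_compl hm hT]; exact Finset.finite_toSet _

lemma sgp_mult {m : ℕ} {T : Finset ℕ} (hm : 1 ≤ m) (hT : T ⊆ Finset.Ioo m (2*m)) :
    mult (sgp m T) = m := by
  have hmem : m ∈ {n | n ∈ sgp m T ∧ n ≠ 0} := by
    refine ⟨Or.inr ⟨le_refl m, fun h => ?_⟩, by omega⟩
    have := Finset.mem_Ioo.mp (hT h); omega
  apply le_antisymm (Nat.sInf_le hmem)
  apply le_csInf ⟨m, hmem⟩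
  rintro n ⟨rfl | ⟨h, -⟩, hn0⟩ <;> omega

lemma sgp_genus {m : ℕ} {T : Finset ℕ} (hm : 1 ≤ m) (hT : T ⊆ Finset.Ioo m (2*m)) :
    genus (sgp m T) = (m - 1) + T.card := by
  rw [genus, sgp_compl hm hT, Set.ncard_coe_finset, Finset.card_union_of_disjoint, Nat.card_Ico]
  rw [Finset.disjoint_left]
  intro a ha hat
  have := Finset.mem_Ioo.mp (hT hat)
  have := Finset.mem_Ico.mp ha
  omega

lemma sgp_frob {m : ℕ} {T : Finset ℕ} (hm : 1 ≤ m) (hT : T ⊆ Finset.Ioo m (2*m)) :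
    frob (sgp m T) < 2 * m := by
  rw [frob, sgp_compl hm hT]
  rcases Set.eq_empty_or_nonempty (↑(Finset.Ico 1 m ∪ T) : Set ℕ) with h | h
  · rw [h]; simp only [csSup_empty, Nat.bot_eq_zero]; omega
  · have hbdd : BddAbove (↑(Finset.Ico 1 m ∪ T) : Set ℕ) := (Finset.Ico 1 m ∪ T).finite_toSet.bddAbove
    have h2 := Nat.sSup_mem h hbdd
    rw [Finset.mem_coe] at h2
    rcases Finset.mem_union.mp h2 with h' | h'
    · have := Finset.mem_Ico.mp h'; omega
    · have := Finset.mem_Ioo.mp (hT h'); omega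

def sgpD (g : ℕ) : Finset (ℕ × Finset ℕ) :=
  (Finset.Ico 1 (g+2)).biUnion
    (fun m => ((Finset.Ioo m (2*m)).powersetCard (g+1-m)).image (fun T => (m, T)))

lemma mem_sgpD {g m : ℕ} {T : Finset ℕ} :
    (m, T) ∈ sgpD g ↔ 1 ≤ m ∧ T ⊆ Finset.Ioo m (2*m) ∧ (m - 1) + T.card = g := by
  simp only [sgpD, Finset.mem_biUnion, Finset.mem_image, Finset.mem_powersetCard,
    Finset.mem_Ico, Prod.mk.injEq]
  constructor
  · rintro ⟨a, ⟨ha1, ha2⟩, T', ⟨hsub, hcard⟩, rfl, rfl⟩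
    refine ⟨ha1, hsub, ?_⟩
    rcases Finset.eq_empty_or_nonempty T' with rfl | ⟨x, hx⟩
    · simp at hcard ⊢; omega
    · have := Finset.mem_Ioo.mp (hsub hx)
      omega
  · rintro ⟨h1, h2, h3⟩
    have hle : T.card ≤ (Finset.Ioo m (2*m)).card := Finset.card_le_card h2
    rw [Nat.card_Ioo] at hle
    exact ⟨m, ⟨h1, by omega⟩, T, ⟨h2, by omega⟩, rfl, rfl⟩

lemma fibsum (n : ℕ) : ∑ k ∈ Finset.range (n+1), Nat.choose (n-k) k = Nat.fib (n+1) := by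
  induction n using Nat.strong_induction_on with
  | _ n ih =>
    match n with
    | 0 => simp
    | 1 => decide
    | (n+2) =>
      have h1 := ih (n+1) (by omega)
      have h0 := ih n (by omega)
      rw [Nat.fib_add_two, ← h1, ← h0]
      rw [Finset.sum_range_succ' (fun k => Nat.choose (n+2-k) k) (n+2)]
      rw [Finset.sum_range_succ (fun k => Nat.choose (n+2-(k+1)) (k+1)) (n+1)]
      rw [Finset.sum_range_succ' (fun k => Nat.choose (n+1-k) k) (n+1)]
      have e1 : ∀ k ∈ Finset.range (n+1), Nat.choose (n+2-(k+1)) (k+1)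
          = Nat.choose (n-k) k + Nat.choose (n-k) (k+1) := by
        intro k hk
        simp only [Finset.mem_range] at hk
        have : n + 2 - (k+1) = (n-k) + 1 := by omega
        rw [this, Nat.choose_succ_succ]
      rw [Finset.sum_congr rfl e1, Finset.sum_add_distrib]
      have : ∀ k, n + 1 - (k+1) = n - k := fun k => by omega
      simp [this]
      ring

lemma card_sgpD (g : ℕ) : (sgpD g).card = Nat.fib (g+1) := by
  rw [sgpD, Finset.card_biUnion]
  · have : ∀ m ∈ Finset.Ico 1 (g+2),
        (((Finset.Ioo m (2*m)).powersetCard (g+1-m)).image (fun T => (m, T))).card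
          = (m-1).choose (g+1-m) := by
      intro m hm
      rw [Finset.card_image_of_injective _ (fun a b h => by simpa using h),
        Finset.card_powersetCard, Nat.card_Ioo]
      congr 1
      omega
    rw [Finset.sum_congr rfl this, Finset.sum_Ico_eq_sum_range]
    have : ∀ k ∈ Finset.range (g+1), (1+k-1).choose (g+1-(1+k)) = k.choose (g-k) := by
      intro k hk
      congr 1 <;> omega
    rw [show g+2-1 = g+1 by omega, Finset.sum_congr rfl this]
    rw [← Finset.sum_range_reflect (fun k => k.choose (g-k)) (g+1)]
    have : ∀ k ∈ Finset.range (g+1), (g+1-1-k).choose (g-(g+1-1-k)) = (g-k).choose k := by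
      intro k hk
      simp only [Finset.mem_range] at hk
      congr 1 <;> omega
    rw [Finset.sum_congr rfl this, fibsum]
  · intro a _ b _ hab
    simp only [Finset.disjoint_left, Finset.mem_image, Finset.mem_powersetCard]
    rintro p ⟨T, _, rfl⟩ ⟨T', _, h⟩
    exact hab (by simpa using (Prod.mk.injEq .. ▸ h).1.symm) 

theorem count_frob_lt_two_mult (g : ℕ) (hg : 0 < g) :
    {S : Set ℕ | IsNumericalSemigroup S ∧ genus S = g ∧ frob S < 2 * mult S}.ncard
      = Nat.fib (g + 1) := by
  have hset : {S : Set ℕ | IsNumericalSemigroup S ∧ genus S = g ∧ frob S < 2 * mult S}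
      = (fun p : ℕ × Finset ℕ => sgp p.1 p.2) '' ↑(sgpD g) := by
    ext S
    simp only [Set.mem_setOf_eq, Set.mem_image, Finset.mem_coe]
    constructor
    · rintro ⟨⟨h0, hadd, hfin⟩, hgen, hfrob⟩
      set m := mult S with hm
      have hne : {n | n ∈ S ∧ n ≠ 0}.Nonempty := by
        have hbdd : BddAbove Sᶜ := hfin.bddAbove
        refine ⟨sSup Sᶜ + 1, ?_, by omega⟩
        by_contra h
        have := le_csSup hbdd (h : sSup Sᶜ + 1 ∈ Sᶜ)
        omega
      have hmS : m ∈ S ∧ m ≠ 0 := Nat.sInf_mem hne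
      have hlow : ∀ n ∈ S, n ≠ 0 → m ≤ n := fun n hn hn0 => Nat.sInf_le ⟨hn, hn0⟩
      have hgap : ∀ n, n ∉ S → n < 2*m := by
        intro n hn
        have h1 : n ≤ frob S := le_csSup hfin.bddAbove hn
        omega
      set T := hfin.toFinset.filter (fun n => m < n) with hTdef
      have hTsub : T ⊆ Finset.Ioo m (2*m) := by
        intro x hx
        simp only [hTdef, Finset.mem_filter, Set.Finite.mem_toFinset, Set.mem_compl_iff] at hx
        exact Finset.mem_Ioo.mpr ⟨hx.2, hgap x hx.1⟩
      have hSeq : S = sgp m T := by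
        ext n
        simp only [sgp, Set.mem_setOf_eq, hTdef, Finset.mem_filter,
          Set.Finite.mem_toFinset, Set.mem_compl_iff]
        constructor
        · intro hn
          rcases eq_or_ne n 0 with rfl | hn0
          · exact Or.inl rfl
          · exact Or.inr ⟨hlow n hn hn0, fun h => h.1 hn⟩
        · rintro (rfl | ⟨hmn, hnT⟩)
          · exact h0
          · by_contra hns
            have : n ≠ m := fun e => hns (e ▸ hmS.1)
            exact hnT ⟨hns, by omega⟩
      have hgm : genus S = (m - 1) + T.card := by
        rw [hSeq]; exact sgp_genus (by omega) hTsub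
      refine ⟨(m, T), mem_sgpD.mpr ⟨?_, hTsub, ?_⟩, hSeq.symm⟩
      · omega
      · omega
    · rintro ⟨⟨m, T⟩, hp, rfl⟩
      obtain ⟨h1, h2, h3⟩ := mem_sgpD.mp hp
      exact ⟨sgp_isNS h1 h2, by rw [sgp_genus h1 h2]; exact h3,
        by rw [sgp_mult h1 h2]; exact sgp_frob h1 h2⟩
  rw [hset, Set.ncard_image_of_injOn, Set.ncard_coe_finset, card_sgpD]
  rintro ⟨m, T⟩ hp ⟨m', T'⟩ hp' heq
  simp only [Finset.mem_coe] at hp hp'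
  obtain ⟨h1, h2, h3⟩ := mem_sgpD.mp hp
  obtain ⟨h1', h2', h3'⟩ := mem_sgpD.mp hp'
  change sgp m T = sgp m' T' at heq
  have e1 := sgp_mult h1 h2
  have e2 := sgp_mult h1' h2'
  rw [heq] at e1
  have hmm : m = m' := by omega
  subst hmm
  have hcompl : (Finset.Ico 1 m ∪ T) = (Finset.Ico 1 m ∪ T') := by
    apply Finset.coe_injective
    rw [← sgp_compl h1 h2, ← sgp_compl h1 h2', heq]
  have hTT : T = T' := by
    ext x
    constructor
    · intro hx
      have hxm := Finset.mem_Ioo.mp (h2 hx)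
      have : x ∈ Finset.Ico 1 m ∪ T' := hcompl ▸ Finset.mem_union_right _ hx
      rcases Finset.mem_union.mp this with h | h
      · have := Finset.mem_Ico.mp h; omega
      · exact h
    · intro hx
      have hxm := Finset.mem_Ioo.mp (h2' hx)
      have : x ∈ Finset.Ico 1 m ∪ T := hcompl ▸ Finset.mem_union_right _ hx
      rcases Finset.mem_union.mp this with h | h
      · have := Finset.mem_Ico.mp h; omega
      · exact h
  rw [hTT]
end

section
/- A tuple (k₁, ..., k_{m-1}) of positive integers is the Kunz coordinate vector of a numerical semigroup of multiplicity m if and only if it satisfies: kᵢ + k_j ≥ k_{i+j} whenever i + j ≤ m - 1, and kᵢ + k_j + 1 ≥ k_{i+j-m} whenever i + j > m (with 1 ≤ i ≤ j ≤ m-1). -/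
lemma quot_rem' (m q r : ℕ) (hm : 0 < m) (hr : r < m) :
    (m * q + r) % m = r ∧ (m * q + r) / m = q := by
  constructor
  · rw [Nat.mul_add_mod, Nat.mod_eq_of_lt hr]
  · rw [Nat.mul_add_div hm, Nat.div_eq_of_lt hr, Nat.add_zero]

theorem kunz_coordinates_characterization (m : ℕ) (hm : 2 ≤ m) (k : ℕ → ℕ)
    (hk : ∀ i, 1 ≤ i → i ≤ m - 1 → 1 ≤ k i) :
    (∃ S : Set ℕ, IsNumericalSemigroup S ∧ mult S = m ∧
        ∀ i, 1 ≤ i → i ≤ m - 1 → sInf {n | n ∈ S ∧ n % m = i} = k i * m + i) ↔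
      ∀ i j, 1 ≤ i → i ≤ j → j ≤ m - 1 →
        (i + j ≤ m - 1 → k (i + j) ≤ k i + k j) ∧
        (m < i + j → k (i + j - m) ≤ k i + k j + 1) := by
  have hm0 : 0 < m := by omega
  constructor
  · -- forward direction
    rintro ⟨S, ⟨h0, hadd, hfin⟩, hmult, hinf⟩ i j hi hij hj
    have hi' : i ≤ m - 1 := le_trans hij hj
    have key : ∀ l, 1 ≤ l → l ≤ m - 1 → k l * m + l ∈ S ∧ (k l * m + l) % m = l := by
      intro l hl1 hl2
      have hne : {n | n ∈ S ∧ n % m = l}.Nonempty := by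
        by_contra h
        rw [Set.not_nonempty_iff_eq_empty] at h
        have := hinf l hl1 hl2
        rw [h] at this
        simp [Nat.sInf_empty] at this
        omega
      have := Nat.sInf_mem hne
      rw [hinf l hl1 hl2] at this
      exact ⟨this.1, this.2⟩
    have hiS := (key i hi hi').1
    have hjS := (key j (le_trans hi hij) hj).1
    have hsum : k i * m + i + (k j * m + j) ∈ S := hadd _ hiS _ hjS
    constructor
    · intro hijm
      have e0 : m * (k i + k j) = k i * m + k j * m := by ring
      have heq : k i * m + i + (k j * m + j) = m * (k i + k j) + (i + j) := by omega
      have hq := quot_rem' m (k i + k j) (i + j) hm0 (by omega)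
      have hmem : m * (k i + k j) + (i + j) ∈ {n | n ∈ S ∧ n % m = i + j} :=
        ⟨heq ▸ hsum, hq.1⟩
      have hle := Nat.sInf_le hmem
      rw [hinf (i + j) (by omega) hijm] at hle
      have : k (i + j) * m ≤ (k i + k j) * m := by
        have e1 : (k i + k j) * m = k i * m + k j * m := by ring
        omega
      exact Nat.le_of_mul_le_mul_right this hm0
    · intro hijm
      have hr1 : 1 ≤ i + j - m := by omega
      have hr2 : i + j - m ≤ m - 1 := by omega
      have e0 : m * (k i + k j + 1) = k i * m + k j * m + m := by ring
      have heq : k i * m + i + (k j * m + j) = m * (k i + k j + 1) + (i + j - m) := by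
        omega
      have hq := quot_rem' m (k i + k j + 1) (i + j - m) hm0 (by omega)
      have hmem : m * (k i + k j + 1) + (i + j - m) ∈ {n | n ∈ S ∧ n % m = i + j - m} :=
        ⟨heq ▸ hsum, hq.1⟩
      have hle := Nat.sInf_le hmem
      rw [hinf (i + j - m) hr1 hr2] at hle
      have : k (i + j - m) * m ≤ (k i + k j + 1) * m := by
        have e1 : (k i + k j + 1) * m = k i * m + k j * m + m := by ring
        omega
      exact Nat.le_of_mul_le_mul_right this hm0
  · -- backward direction
    intro h
    have h' : ∀ i j, 1 ≤ i → 1 ≤ j → i ≤ m - 1 → j ≤ m - 1 →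
        (i + j ≤ m - 1 → k (i + j) ≤ k i + k j) ∧
        (m < i + j → k (i + j - m) ≤ k i + k j + 1) := by
      intro i j hi hj hi' hj'
      rcases le_total i j with hle | hle
      · exact h i j hi hle hj'
      · have H := h j i hj hle hi'
        rw [Nat.add_comm j i] at H
        exact ⟨fun hh => by have := H.1 hh; omega, fun hh => by have := H.2 hh; omega⟩
    have hdec : ∀ n : ℕ, n ∈ {n : ℕ | n % m = 0 ∨ k (n % m) ≤ n / m} →
        ∃ q r, r < m ∧ (r = 0 ∨ k r ≤ q) ∧ n = m * q + r := by
      intro n hn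
      exact ⟨n / m, n % m, Nat.mod_lt _ hm0, hn, (Nat.div_add_mod n m).symm⟩
    refine ⟨{n | n % m = 0 ∨ k (n % m) ≤ n / m}, ⟨?_, ?_, ?_⟩, ?_, ?_⟩
    · exact Or.inl (Nat.zero_mod m)
    · -- closed under addition
      intro a ha b hb
      obtain ⟨qa, ra, hra, ha', rfl⟩ := hdec a ha
      obtain ⟨qb, rb, hrb, hb', rfl⟩ := hdec b hb
      simp only [Set.mem_setOf_eq]
      have ed1 : m * (qa + qb + 1) = m * qa + m * qb + m := by ring
      by_cases hza : ra = 0 <;> by_cases hzb : rb = 0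
      · have heq : m * qa + ra + (m * qb + rb) = m * (qa + qb) + 0 := by
          subst hza hzb; ring
        rw [heq]
        exact Or.inl (quot_rem' m _ 0 hm0 hm0).1
      · have hb2 : k rb ≤ qb := hb'.resolve_left hzb
        have heq : m * qa + ra + (m * qb + rb) = m * (qa + qb) + rb := by
          subst hza; ring
        rw [heq]
        have hq := quot_rem' m (qa + qb) rb hm0 hrb
        right
        rw [hq.1, hq.2]
        omega
      · have ha2 : k ra ≤ qa := ha'.resolve_left hza
        have heq : m * qa + ra + (m * qb + rb) = m * (qa + qb) + ra := by
          subst hzb; ring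
        rw [heq]
        have hq := quot_rem' m (qa + qb) ra hm0 hra
        right
        rw [hq.1, hq.2]
        omega
      · have ha2 : k ra ≤ qa := ha'.resolve_left hza
        have hb2 : k rb ≤ qb := hb'.resolve_left hzb
        have hia : 1 ≤ ra := by omega
        have hib : 1 ≤ rb := by omega
        have H := h' ra rb hia hib (by omega) (by omega)
        by_cases hc : ra + rb < m
        · have heq : m * qa + ra + (m * qb + rb) = m * (qa + qb) + (ra + rb) := by ring
          rw [heq]
          have hq := quot_rem' m (qa + qb) (ra + rb) hm0 hc
          right
          rw [hq.1, hq.2]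
          have := H.1 (by omega)
          omega
        · by_cases hc2 : ra + rb = m
          · have heq : m * qa + ra + (m * qb + rb) = m * (qa + qb + 1) + 0 := by omega
            rw [heq]
            exact Or.inl (quot_rem' m _ 0 hm0 hm0).1
          · have heq : m * qa + ra + (m * qb + rb) = m * (qa + qb + 1) + (ra + rb - m) := by
              omega
            rw [heq]
            have hq := quot_rem' m (qa + qb + 1) (ra + rb - m) hm0 (by omega)
            right
            rw [hq.1, hq.2]
            have := H.2 (by omega)
            omega
    · -- complement finite
      classical
      set K := Finset.sup (Finset.range m) k with hK
      apply Set.Finite.subset (Set.finite_Iio (m * (K + 1)))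
      intro n hn
      simp only [Set.mem_compl_iff, Set.mem_setOf_eq, not_or, not_le] at hn
      have hmn : n % m < m := Nat.mod_lt _ hm0
      have hKk : k (n % m) ≤ K := Finset.le_sup (Finset.mem_range.2 hmn)
      have hd := Nat.div_add_mod n m
      have h1 : m * (n / m) + m ≤ m * K + m := by
        have := Nat.mul_le_mul_left m (show n / m ≤ K by omega)
        omega
      have h2 : m * (K + 1) = m * K + m := by ring
      simp only [Set.mem_Iio]
      omega
    · -- mult = m
      have hmS : m ∈ {n : ℕ | n % m = 0 ∨ k (n % m) ≤ n / m} := Or.inl (Nat.mod_self m)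
      apply le_antisymm
      · have hmem0 : m ∈ {n : ℕ | n ∈ {n : ℕ | n % m = 0 ∨ k (n % m) ≤ n / m} ∧ n ≠ 0} :=
          ⟨hmS, by omega⟩
        exact Nat.sInf_le hmem0
      · have hne : ({n : ℕ | n ∈ {n : ℕ | n % m = 0 ∨ k (n % m) ≤ n / m} ∧ n ≠ 0}).Nonempty :=
          ⟨m, hmS, by omega⟩
        apply le_csInf hne
        rintro n ⟨hn, hn0⟩
        obtain ⟨q, r, hr, h1, rfl⟩ := hdec n hn
        by_cases hz : r = 0
        · subst hz
          have hq0 : q ≠ 0 := by rintro rfl; simp at hn0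
          have : m * 1 ≤ m * q := Nat.mul_le_mul_left m (Nat.pos_of_ne_zero hq0)
          omega
        · have h2 : k r ≤ q := h1.resolve_left hz
          have hkr : 1 ≤ k r := hk r (by omega) (by omega)
          have : m * 1 ≤ m * q := Nat.mul_le_mul_left m (by omega)
          omega
    · -- the sInf condition
      intro i hi1 hi2
      have hilt : i < m := by omega
      have hq := quot_rem' m (k i) i hm0 hilt
      have heq : k i * m + i = m * k i + i := by ring
      have hmem : k i * m + i ∈ {n : ℕ | (n % m = 0 ∨ k (n % m) ≤ n / m) ∧ n % m = i} := by
        rw [heq]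
        exact ⟨Or.inr (by rw [hq.1, hq.2]), hq.1⟩
      apply le_antisymm
      · exact Nat.sInf_le hmem
      · apply le_csInf ⟨_, hmem⟩
        rintro n ⟨hn, hni⟩
        obtain ⟨q, r, hr, h1, rfl⟩ := hdec n hn
        rw [(quot_rem' m q r hm0 hr).1] at hni
        subst hni
        rcases h1 with h1 | h1
        · omega
        · have : m * k r ≤ m * q := Nat.mul_le_mul_left m h1
          omega
end
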